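/- There exists a nonzero real symmetric 7×7 matrix M (indexed 0,1,…,6) with M_{00} = 0, M_{0i} = M_{ii} for all i ∈ {1,…,6}, M_{ij} = 0 whenever {i,j} is an edge of G₆, and M·Z* = 0. An explicit witness is: M_{04} = M_{44} = −(1+√5)/2, M_{06} = M_{66} = (1+√5)/2, M_{34} = −1, M_{36} = 1, M_{45} = −1, M_{56} = 1, and all other independent entries equal to 0. Hence Z* is dual degenerate, i.e. the nondegeneracy system associated with Z* admits a nontrivial solution. -/
import Mathlib


/-- Adjacency in the graph `G₆` on the vertex set `{1, …, 6}` with edge set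
`{ {1,3}, {1,4}, {1,6}, {2,4}, {2,5}, {2,6}, {3,5}, {4,6} }`. -/
def g6Adj (i j : ℕ) : Prop :=
  (i, j) ∈ [(1, 3), (1, 4), (1, 6), (2, 4), (2, 5), (2, 6), (3, 5), (4, 6)] ∨
    (j, i) ∈ [(1, 3), (1, 4), (1, 6), (2, 4), (2, 5), (2, 6), (3, 5), (4, 6)]

/-- The explicit dual optimal solution `Z*` of the Lovász theta SDP of `G₆`, with
`c = (√5 - 1)/2`. -/
noncomputable def g6Zstar : Matrix (Fin 7) (Fin 7) ℝ :=
  let c : ℝ := (Real.sqrt 5 - 1) / 2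
  !![Real.sqrt 5, -1, -1, -1, -1, -1, -1;
     -1, 1, 0, c, c, 0, c;
     -1, 0, 1, 0, c, c, c;
     -1, c, 0, 1, 0, c, 0;
     -1, c, c, 0, 1, 0, 1;
     -1, 0, c, c, 0, 1, 0;
     -1, c, c, 0, 1, 0, 1]

/-- The explicit witness of dual degeneracy of `Z*`: with `g = (1 + √5)/2`, the symmetric
matrix with `M 0 4 = M 4 4 = -g`, `M 0 6 = M 6 6 = g`, `M 3 4 = -1`, `M 3 6 = 1`,
`M 4 5 = -1`, `M 5 6 = 1`, and all other independent entries `0`. -/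
noncomputable def g6M : Matrix (Fin 7) (Fin 7) ℝ :=
  let g : ℝ := (1 + Real.sqrt 5) / 2
  !![0, 0, 0, 0, -g, 0, g;
     0, 0, 0, 0, 0, 0, 0;
     0, 0, 0, 0, 0, 0, 0;
     0, 0, 0, 0, -1, 0, 1;
     -g, 0, 0, -1, -g, -1, 0;
     0, 0, 0, 0, -1, 0, 1;
     g, 0, 0, 1, 0, 1, g]

section vecEval
variable {α : Type*} (a b c d e f g : α)
lemma v7_0 : ![a,b,c,d,e,f,g] 0 = a := rfl
lemma v7_1 : ![a,b,c,d,e,f,g] 1 = b := rfl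
lemma v7_2 : ![a,b,c,d,e,f,g] 2 = c := rfl
lemma v7_3 : ![a,b,c,d,e,f,g] 3 = d := rfl
lemma v7_4 : ![a,b,c,d,e,f,g] 4 = e := rfl
lemma v7_5 : ![a,b,c,d,e,f,g] 5 = f := rfl
lemma v7_6 : ![a,b,c,d,e,f,g] 6 = g := rfl
lemma w7_0 (h : 0 < 7) : ![a,b,c,d,e,f,g] (⟨0, h⟩ : Fin 7) = a := rfl
lemma w7_1 (h : 1 < 7) : ![a,b,c,d,e,f,g] (⟨1, h⟩ : Fin 7) = b := rfl
lemma w7_2 (h : 2 < 7) : ![a,b,c,d,e,f,g] (⟨2, h⟩ : Fin 7) = c := rfl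
lemma w7_3 (h : 3 < 7) : ![a,b,c,d,e,f,g] (⟨3, h⟩ : Fin 7) = d := rfl
lemma w7_4 (h : 4 < 7) : ![a,b,c,d,e,f,g] (⟨4, h⟩ : Fin 7) = e := rfl
lemma w7_5 (h : 5 < 7) : ![a,b,c,d,e,f,g] (⟨5, h⟩ : Fin 7) = f := rfl
lemma w7_6 (h : 6 < 7) : ![a,b,c,d,e,f,g] (⟨6, h⟩ : Fin 7) = g := rfl
end vecEval

set_option maxHeartbeats 2000000 in
lemma g6_mul_zero : g6M * g6Zstar = 0 := by
  have h5 : Real.sqrt 5 * Real.sqrt 5 = 5 := Real.mul_self_sqrt (by norm_num)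
  ext i j
  fin_cases i <;> fin_cases j <;>
    simp only [g6M, g6Zstar, Matrix.mul_apply, Fin.sum_univ_seven, Matrix.of_apply,
      v7_0, v7_1, v7_2, v7_3, v7_4, v7_5, v7_6, w7_0, w7_1, w7_2, w7_3, w7_4, w7_5, w7_6,
      Matrix.zero_apply] <;>
    nlinarith [h5]

lemma g6_ne_zero : g6M ≠ 0 := by
  intro h
  have h6 := congrFun (congrFun h 0) 6
  simp only [g6M, Matrix.zero_apply, Matrix.of_apply, v7_0, v7_6] at h6
  nlinarith [Real.sqrt_nonneg 5]

lemma g6_symm : g6M.IsSymm := by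
  unfold Matrix.IsSymm
  ext i j
  fin_cases i <;> fin_cases j <;> rfl

set_option maxHeartbeats 1000000 in
lemma g6_main :
    g6M ≠ 0 ∧ g6M.IsSymm ∧ g6M 0 0 = 0 ∧
      (∀ i : Fin 7, i.val ≠ 0 → g6M 0 i = g6M i i) ∧
      (∀ i j : Fin 7, i.val ≠ 0 → j.val ≠ 0 → g6Adj i.val j.val → g6M i j = 0) ∧
      g6M * g6Zstar = 0 := by
  refine ⟨g6_ne_zero, g6_symm, rfl, ?_, ?_, g6_mul_zero⟩
  · intro i hi
    fin_cases i <;>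
      first
        | (exact absurd rfl hi)
        | (simp only [g6M, Matrix.of_apply, v7_0, w7_0, w7_1, w7_2, w7_3, w7_4, w7_5, w7_6])
  · intro i j hi hj hadj
    fin_cases i <;> fin_cases j <;>
      first
        | (exact absurd rfl hi)
        | (exact absurd rfl hj)
        | (exact absurd hadj (by unfold g6Adj; decide))
        | rfl

/-- There is a nonzero real symmetric `7 × 7` matrix `M` with `M 0 0 = 0`, `M 0 i = M i i`
for `i ∈ {1, …, 6}`, `M i j = 0` on edges of `G₆`, and `M · Z* = 0` — namely the explicit
witness `g6M`.  Hence `Z*` is dual degenerate: the nondegeneracy system associated with `Z*`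
admits a nontrivial solution. -/
theorem g6Zstar_dual_degenerate :
    (g6M ≠ 0 ∧ g6M.IsSymm ∧ g6M 0 0 = 0 ∧
      (∀ i : Fin 7, i.val ≠ 0 → g6M 0 i = g6M i i) ∧
      (∀ i j : Fin 7, i.val ≠ 0 → j.val ≠ 0 → g6Adj i.val j.val → g6M i j = 0) ∧
      g6M * g6Zstar = 0) ∧
    ∃ M : Matrix (Fin 7) (Fin 7) ℝ, M ≠ 0 ∧ M.IsSymm ∧ M 0 0 = 0 ∧
      (∀ i : Fin 7, i.val ≠ 0 → M 0 i = M i i) ∧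
      (∀ i j : Fin 7, i.val ≠ 0 → j.val ≠ 0 → g6Adj i.val j.val → M i j = 0) ∧
      M * g6Zstar = 0 :=
  ⟨g6_main, g6M, g6_main⟩
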